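/- Let N be a finite set of n ≥ 1 identical agents, M a finite set of items, and v : M → ℝ with v_j ≥ 0 for all j ∈ M. Let σ : M → N be an EF1 allocation. Then for every allocation ρ : M → N, ∏_{i∈N} ( ∑_{j ∈ σ⁻¹(i)} v_j ) ≥ e^{−n/e} · ∏_{i∈N} ( ∑_{j ∈ ρ⁻¹(i)} v_j ). Equivalently, the Nash social welfare (∏_{i∈N} v(σ⁻¹(i)))^{1/n} of σ is at least e^{−1/e} times the optimum Nash social welfare. -/

import Mathlib

open Finset in
/-- `e * w ≤ exp w` for all real `w`. -/
lemma e_mul_le_exp (w : ℝ) : Real.exp 1 * w ≤ Real.exp w := by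
  have h : w ≤ Real.exp (w - 1) := by
    have := Real.add_one_le_exp (w - 1); linarith
  calc Real.exp 1 * w ≤ Real.exp 1 * Real.exp (w - 1) :=
        mul_le_mul_of_nonneg_left h (Real.exp_nonneg 1)
    _ = Real.exp w := by rw [← Real.exp_add]; ring_nf

/-- `exp y ≤ 1 + e * y` for `y ∈ [0,1]`. -/
lemma exp_le_one_add_e_mul {y : ℝ} (h0 : 0 ≤ y) (h1 : y ≤ 1) :
    Real.exp y ≤ 1 + Real.exp 1 * y := by
  have h := convexOn_exp.2 (Set.mem_univ (0:ℝ)) (Set.mem_univ (1:ℝ))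
    (by linarith : (0:ℝ) ≤ 1 - y) h0 (by ring)
  simp only [smul_eq_mul, mul_zero, mul_one, zero_add, Real.exp_zero] at h
  nlinarith [Real.exp_pos 1, Real.exp_one_gt_d9]

/-- key analytic lemma for agents with no big item. -/
lemma key1 {m x : ℝ} (hm : 0 < m) (h1 : m ≤ x) (h2 : x ≤ m + Real.exp 1 * m) :
    Real.exp (x / (Real.exp 1 * m)) * m ≤ Real.exp (Real.exp 1)⁻¹ * x := by
  have he : (0:ℝ) < Real.exp 1 := Real.exp_pos 1
  have hem : 0 < Real.exp 1 * m := by positivity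
  set y : ℝ := (x - m) / (Real.exp 1 * m) with hy
  have hy0 : 0 ≤ y := by apply div_nonneg <;> linarith
  have hy1 : y ≤ 1 := by rw [div_le_one hem]; linarith
  have hx : x = m + (Real.exp 1 * m) * y := by rw [hy, mul_div_cancel₀ _ hem.ne']; ring
  have harg : x / (Real.exp 1 * m) = (Real.exp 1)⁻¹ + y := by
    rw [hx]; field_simp
  rw [harg, Real.exp_add]
  have hb : Real.exp y * m ≤ x := by
    have := exp_le_one_add_e_mul hy0 hy1
    calc Real.exp y * m ≤ (1 + Real.exp 1 * y) * m :=
          mul_le_mul_of_nonneg_right this hm.le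
      _ = x := by rw [hx]; ring
  calc Real.exp (Real.exp 1)⁻¹ * Real.exp y * m
      = Real.exp (Real.exp 1)⁻¹ * (Real.exp y * m) := by ring
    _ ≤ Real.exp (Real.exp 1)⁻¹ * x := mul_le_mul_of_nonneg_left hb (Real.exp_nonneg _)

/-- `(p:ℝ) ≤ e^(p-1)` (natural power). -/
lemma nat_le_e_pow (p : ℕ) : (p : ℝ) ≤ Real.exp 1 ^ (p - 1) := by
  have h2 : (2:ℝ) ≤ Real.exp 1 := by
    have := Real.add_one_le_exp 1; linarith
  have : (1:ℝ) + (p-1 : ℕ) * 1 ≤ (1+1) ^ (p-1 : ℕ) := one_add_mul_le_pow (by norm_num) _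
  have h3 : ((p:ℝ)) ≤ (2:ℝ) ^ (p - 1 : ℕ) := by
    rcases Nat.eq_zero_or_pos p with hp | hp
    · subst hp; simp
    · have hc : ((p - 1 : ℕ) : ℝ) = (p : ℝ) - 1 := by
        have h1 := Nat.one_le_iff_ne_zero.mpr hp.ne'
        push_cast [Nat.cast_sub h1]; ring
      have h4 : (1:ℝ) + ((p-1:ℕ):ℝ) * 1 ≤ (1+1) ^ (p-1 : ℕ) :=
        one_add_mul_le_pow (by norm_num : (-2:ℝ) ≤ 1) _
      rw [hc] at h4; norm_num at h4 ⊢; linarith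
  calc (p:ℝ) ≤ (2:ℝ)^(p-1) := h3
    _ ≤ Real.exp 1 ^ (p-1) := pow_le_pow_left₀ (by norm_num) h2 _

/-- An allocation `σ : M → N` of items to identical agents with item values `v : M → ℝ` is
EF1 (envy-free up to one item): for all agents `i, i'` with `σ⁻¹(i')` nonempty,
`v(σ⁻¹(i)) ≥ v(σ⁻¹(i')) − max_{j ∈ σ⁻¹(i')} v_j`. -/
def IsEF1 {M N : Type*} [Fintype M] [DecidableEq N] (v : M → ℝ) (σ : M → N) : Prop :=
  ∀ i i' : N, ∀ hne : (Finset.univ.filter (fun j => σ j = i')).Nonempty,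
    (∑ j ∈ Finset.univ.filter (fun j => σ j = i'), v j)
        - (Finset.univ.filter (fun j => σ j = i')).sup' hne v
      ≤ ∑ j ∈ Finset.univ.filter (fun j => σ j = i), v j

/-- EF1 gap, Barman–Krishnamurthy–Vaish: for identical agents with nonnegative
item values, any EF1 allocation `σ` satisfies
`∏_i v(σ⁻¹(i)) ≥ e^{−n/e} · ∏_i v(ρ⁻¹(i))` for every allocation `ρ`. -/
theorem stmt8 {M N : Type*} [Fintype M] [Fintype N] [DecidableEq N] [Nonempty N]
    (v : M → ℝ) (hv : ∀ j, 0 ≤ v j)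
    (σ : M → N) (hσ : IsEF1 v σ)
    (ρ : M → N) :
    Real.exp (-(Fintype.card N : ℝ) / Real.exp 1) *
        ∏ i, (∑ j ∈ Finset.univ.filter (fun j => ρ j = i), v j)
      ≤ ∏ i, (∑ j ∈ Finset.univ.filter (fun j => σ j = i), v j) := by
  classical
  set e : ℝ := Real.exp 1 with he
  have he0 : (0:ℝ) < e := Real.exp_pos 1
  have he1 : (1:ℝ) < e := by
    have := Real.add_one_le_exp 1; rw [he]; linarith
  set s : N → ℝ := fun i => ∑ j ∈ Finset.univ.filter (fun j => σ j = i), v j with hs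
  set r : N → ℝ := fun i => ∑ j ∈ Finset.univ.filter (fun j => ρ j = i), v j with hr
  have hsnn : ∀ i, 0 ≤ s i := fun i => Finset.sum_nonneg (fun j _ => hv j)
  have hrnn : ∀ i, 0 ≤ r i := fun i => Finset.sum_nonneg (fun j _ => hv j)
  -- reduce goal
  have hgoal : (∏ i, r i) ≤ Real.exp ((Fintype.card N : ℝ) * e⁻¹) * ∏ i, s i →
      Real.exp (-(Fintype.card N : ℝ) / e) * (∏ i, r i) ≤ ∏ i, s i := by
    intro h
    rw [neg_div, Real.exp_neg, div_eq_mul_inv]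
    exact (inv_mul_le_iff₀ (Real.exp_pos _)).mpr h
  apply hgoal
  -- trivial case: some optimal bundle has zero value
  by_cases hpos : ∀ i, 0 < r i
  case neg =>
    push_neg at hpos
    obtain ⟨i0, hi0⟩ := hpos
    have : r i0 = 0 := le_antisymm hi0 (hrnn i0)
    rw [Finset.prod_eq_zero (Finset.mem_univ i0) this]
    exact mul_nonneg (Real.exp_nonneg _) (Finset.prod_nonneg (fun i _ => hsnn i))
  -- minimum bundle value
  set m : ℝ := Finset.univ.inf' Finset.univ_nonempty s with hm
  obtain ⟨istar, -, histar⟩ := Finset.exists_mem_eq_inf' Finset.univ_nonempty s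
  have hmle : ∀ i, m ≤ s i := fun i => Finset.inf'_le s (Finset.mem_univ i)
  have hm0 : 0 ≤ m := by rw [hm, histar]; exact hsnn istar
  -- EF1 consequence: two items in the same σ-bundle
  have hEF1' : ∀ (j j' : M), σ j = σ j' → j ≠ j' → min (v j) (v j') ≤ m := by
    intro j j' hjj hne'
    set i := σ j with hi
    have hjmem : j ∈ Finset.univ.filter (fun a => σ a = i) := by
      simp [Finset.mem_filter, hi]
    have hne : (Finset.univ.filter (fun a => σ a = i)).Nonempty := ⟨j, hjmem⟩
    have hj'mem : j' ∈ Finset.univ.filter (fun a => σ a = i) := by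
      simp [Finset.mem_filter, ← hjj]
    have hEF : s i - (Finset.univ.filter (fun a => σ a = i)).sup' hne v ≤ m := by
      rw [hm, histar]; exact hσ istar i hne
    obtain ⟨j0, hj0mem, hj0⟩ := Finset.exists_mem_eq_sup' hne v
    have hsum : s i = v j0 + ∑ a ∈ (Finset.univ.filter (fun a => σ a = i)).erase j0, v a := by
      rw [hs]; exact (Finset.add_sum_erase _ v hj0mem).symm
    have herase : ∑ a ∈ (Finset.univ.filter (fun a => σ a = i)).erase j0, v a ≤ m := by
      calc _ = s i - v j0 := by rw [hsum]; ring
        _ = s i - (Finset.univ.filter (fun a => σ a = i)).sup' hne v := by rw [hj0]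
        _ ≤ m := hEF
    set j'' := if j0 = j then j' else j with hj''
    have hj''mem : j'' ∈ (Finset.univ.filter (fun a => σ a = i)).erase j0 := by
      rw [Finset.mem_erase]
      rw [hj'']
      split_ifs with h
      · exact ⟨by rw [h]; exact hne'.symm, hj'mem⟩
      · exact ⟨Ne.symm h, hjmem⟩
    have hle : v j'' ≤ ∑ a ∈ (Finset.univ.filter (fun a => σ a = i)).erase j0, v a :=
      Finset.single_le_sum (fun a _ => hv a) hj''mem
    have : min (v j) (v j') ≤ v j'' := by
      rw [hj'']; split_ifs
      · exact min_le_right _ _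
      · exact min_le_left _ _
    linarith
  by_cases hmpos : 0 < m
  case neg =>
    -- m = 0 : derive a contradiction
    exfalso
    have hmz : m = 0 := le_antisymm (not_lt.mp hmpos) hm0
    set P : Finset M := Finset.univ.filter (fun j => 0 < v j) with hP
    -- each ρ-bundle contains a positive item
    have hchoice : ∀ i : N, ∃ j, ρ j = i ∧ 0 < v j := by
      intro i
      by_contra hcon
      push_neg at hcon
      have : r i ≤ 0 := Finset.sum_nonpos (by
        intro j hj
        rw [Finset.mem_filter] at hj
        exact hcon j hj.2)
      exact absurd (hpos i) (not_lt.mpr this)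
    choose c hc1 hc2 using hchoice
    have hinj : Set.InjOn σ (P : Set M) := by
      intro j hj j' hj' hjj
      by_contra hne'
      rw [Finset.mem_coe, hP, Finset.mem_filter] at hj hj'
      have := hEF1' j j' hjj hne'
      rw [hmz] at this
      rcases le_or_gt (v j) (v j') with h | h
      · rw [min_eq_left h] at this; linarith [hj.2]
      · rw [min_eq_right h.le] at this; linarith [hj'.2]
    have hcard1 : Fintype.card N ≤ P.card := by
      have := Finset.card_le_card_of_injOn (s := (Finset.univ : Finset N)) (t := P) c
        (fun i _ => by rw [hP, Finset.mem_coe, Finset.mem_filter]; exact ⟨Finset.mem_univ _, hc2 i⟩)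
        (fun i _ i' _ hii => by rw [← hc1 i, ← hc1 i', hii])
      simpa using this
    have hcard2 : P.card ≤ Fintype.card N := by
      have := Finset.card_le_card_of_injOn (s := P) (t := (Finset.univ : Finset N)) σ
        (fun j _ => Finset.mem_univ _) hinj
      simpa using this
    have himg : P.image σ = Finset.univ := by
      apply Finset.eq_univ_of_card
      rw [Finset.card_image_of_injOn hinj]
      exact le_antisymm hcard2 hcard1
    -- istar has a positive item
    have : istar ∈ P.image σ := by rw [himg]; exact Finset.mem_univ istar
    obtain ⟨j, hjP, hjσ⟩ := Finset.mem_image.mp this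
    rw [hP, Finset.mem_filter] at hjP
    have hjmem : j ∈ Finset.univ.filter (fun a => σ a = istar) := by
      simp [Finset.mem_filter, hjσ]
    have : v j ≤ s istar := Finset.single_le_sum (fun a _ => hv a) hjmem
    rw [← histar, ← hm, hmz] at this
    linarith [hjP.2]
  -- MAIN CASE : m > 0
  have hem : (0:ℝ) < e * m := by positivity
  set B : Finset M := Finset.univ.filter (fun j => e * m ≤ v j) with hB
  have honeσ : ∀ i : N, ∀ j ∈ B, ∀ j' ∈ B, σ j = i → σ j' = i → j = j' := by
    intro i j hj j' hj' hji hj'i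
    by_contra hne'
    have hmin := hEF1' j j' (hji.trans hj'i.symm) hne'
    rw [hB, Finset.mem_filter] at hj hj'
    have hmm : m < e * m := by nlinarith
    rcases le_total (v j) (v j') with h | h
    · rw [min_eq_left h] at hmin; linarith [hj.2]
    · rw [min_eq_right h] at hmin; linarith [hj'.2]
  set K : Finset N := B.image σ with hK
  -- σ-side small parts
  set w : N → ℝ := fun i => ∑ j ∈ Bᶜ.filter (fun j => σ j = i), v j with hw
  have hwnn : ∀ i, 0 ≤ w i := fun i => Finset.sum_nonneg fun j _ => hv j
  have hsplitσ : ∀ i, s i = (∑ j ∈ B.filter (fun j => σ j = i), v j) + w i := by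
    intro i
    have h1 : (Finset.univ.filter (fun j => σ j = i)).filter (fun j => j ∈ B)
        = B.filter (fun j => σ j = i) := by
      ext j; simp only [Finset.mem_filter, Finset.mem_univ, true_and]; tauto
    have h2 : (Finset.univ.filter (fun j => σ j = i)).filter (fun j => ¬ j ∈ B)
        = Bᶜ.filter (fun j => σ j = i) := by
      ext j; simp only [Finset.mem_filter, Finset.mem_univ, true_and, Finset.mem_compl]; tauto
    have h3 := Finset.sum_filter_add_sum_filter_not
      (Finset.univ.filter (fun j => σ j = i)) (fun j => j ∈ B) v
    rw [h1, h2] at h3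
    exact h3.symm
  set ℓ : N → ℝ := fun i => if i ∈ K then ∏ j ∈ B.filter (fun j => σ j = i), v j else m with hℓ
  have hℓnn : ∀ i, 0 ≤ ℓ i := by
    intro i; rw [hℓ]; dsimp only
    split_ifs
    · exact Finset.prod_nonneg fun j _ => hv j
    · exact hm0
  -- per-agent σ-side bound
  have hclaimA : ∀ i : N, Real.exp (w i / (e * m)) * ℓ i ≤ Real.exp e⁻¹ * s i := by
    intro i
    by_cases hiK : i ∈ K
    · obtain ⟨b, hbB, hbσ⟩ := Finset.mem_image.mp hiK
      have hfib : B.filter (fun j => σ j = i) = {b} := by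
        apply Finset.eq_singleton_iff_unique_mem.mpr
        refine ⟨Finset.mem_filter.mpr ⟨hbB, hbσ⟩, ?_⟩
        intro j hj
        rw [Finset.mem_filter] at hj
        exact honeσ i j hj.1 b hbB hj.2 hbσ
      have hℓi : ℓ i = v b := by rw [hℓ]; simp only [hiK, if_pos, hfib, Finset.prod_singleton]
      have hvbB : e * m ≤ v b := by
        rw [hB, Finset.mem_filter] at hbB; exact hbB.2
      have hsi : s i = v b + w i := by rw [hsplitσ i, hfib, Finset.sum_singleton]
      have hbmem : b ∈ Finset.univ.filter (fun a => σ a = i) := by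
        simp only [Finset.mem_filter, Finset.mem_univ, true_and]; exact hbσ
      have hne : (Finset.univ.filter (fun a => σ a = i)).Nonempty := ⟨b, hbmem⟩
      have hEF : s i - (Finset.univ.filter (fun a => σ a = i)).sup' hne v ≤ m := by
        rw [hm, histar]; exact hσ istar i hne
      have hsup : (Finset.univ.filter (fun a => σ a = i)).sup' hne v ≤ v b := by
        apply Finset.sup'_le
        intro j hj
        by_cases hjB : j ∈ B
        · have : j = b := honeσ i j hjB b hbB (Finset.mem_filter.mp hj).2 hbσ
          rw [this]
        · rw [hB, Finset.mem_filter] at hjB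
          push_neg at hjB
          have := hjB (Finset.mem_univ j)
          linarith
      have hwm : w i ≤ m := by linarith
      rw [hℓi]
      have h1 : Real.exp (w i / (e*m)) ≤ Real.exp e⁻¹ := by
        apply Real.exp_le_exp.mpr
        rw [div_le_iff₀ hem]
        calc w i ≤ m := hwm
          _ = e⁻¹ * (e * m) := by field_simp
      have h2 : v b ≤ s i := by rw [hsi]; linarith [hwnn i]
      exact mul_le_mul h1 h2 (by linarith) (Real.exp_nonneg _)
    · have hfib : B.filter (fun j => σ j = i) = ∅ := by
        rw [Finset.eq_empty_iff_forall_notMem]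
        intro j hj
        rw [Finset.mem_filter] at hj
        exact hiK (Finset.mem_image.mpr ⟨j, hj.1, hj.2⟩)
      have hsi : s i = w i := by rw [hsplitσ i, hfib, Finset.sum_empty, zero_add]
      have hℓi : ℓ i = m := by rw [hℓ]; simp only [hiK, if_neg, if_false]
      rw [hℓi, ← hsi]
      have hsle : s i ≤ m + e * m := by
        have hne : (Finset.univ.filter (fun a => σ a = i)).Nonempty := by
          rw [Finset.filter_nonempty_iff]
          by_contra hcon
          push_neg at hcon
          have hempty : Finset.univ.filter (fun a => σ a = i) = ∅ := by
            rw [Finset.eq_empty_iff_forall_notMem]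
            intro j hj
            rw [Finset.mem_filter] at hj
            exact hcon j (Finset.mem_univ j) hj.2
          have : s i = 0 := by
            rw [hs]; dsimp only; rw [hempty, Finset.sum_empty]
          linarith [hmle i, hmpos]
        have hEF : s i - (Finset.univ.filter (fun a => σ a = i)).sup' hne v ≤ m := by
          rw [hm, histar]; exact hσ istar i hne
        have hsup : (Finset.univ.filter (fun a => σ a = i)).sup' hne v ≤ e * m := by
          apply Finset.sup'_le
          intro j hj
          by_cases hjB : j ∈ B
          · exfalso
            exact hiK (Finset.mem_image.mpr ⟨j, hjB, (Finset.mem_filter.mp hj).2⟩)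
          · rw [hB, Finset.mem_filter] at hjB
            push_neg at hjB
            linarith [hjB (Finset.mem_univ j)]
        linarith
      have := key1 hmpos (hmle i) (by rw [← he]; exact hsle)
      rw [← he] at this
      exact this
  -- ρ-side small parts
  set u : N → ℝ := fun i => ∑ j ∈ Bᶜ.filter (fun j => ρ j = i), v j with hu
  have hunn : ∀ i, 0 ≤ u i := fun i => Finset.sum_nonneg fun j _ => hv j
  have hsplitρ : ∀ i, r i = (∑ j ∈ B.filter (fun j => ρ j = i), v j) + u i := by
    intro i
    have h1 : (Finset.univ.filter (fun j => ρ j = i)).filter (fun j => j ∈ B)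
        = B.filter (fun j => ρ j = i) := by
      ext j; simp only [Finset.mem_filter, Finset.mem_univ, true_and]; tauto
    have h2 : (Finset.univ.filter (fun j => ρ j = i)).filter (fun j => ¬ j ∈ B)
        = Bᶜ.filter (fun j => ρ j = i) := by
      ext j; simp only [Finset.mem_filter, Finset.mem_univ, true_and, Finset.mem_compl]; tauto
    have h3 := Finset.sum_filter_add_sum_filter_not
      (Finset.univ.filter (fun j => ρ j = i)) (fun j => j ∈ B) v
    rw [h1, h2] at h3
    exact h3.symm
  -- per-bundle ρ-side bound
  have hclaimB : ∀ i : N, m ^ (B.filter (fun j => ρ j = i)).card * r i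
      ≤ Real.exp (u i / (e * m)) * (m * ∏ j ∈ B.filter (fun j => ρ j = i), v j) := by
    intro i
    set F := B.filter (fun j => ρ j = i) with hF
    set p := F.card with hp
    set c := ∑ j ∈ F, v j with hc
    set P := ∏ j ∈ F, v j with hPd
    have hri : r i = c + u i := hsplitρ i
    have hFB : ∀ j ∈ F, e * m ≤ v j := by
      intro j hj
      rw [hF, Finset.mem_filter, hB, Finset.mem_filter] at hj
      exact hj.1.2
    have hcnn : 0 ≤ c := Finset.sum_nonneg fun j _ => hv j
    have hPnn : 0 ≤ P := Finset.prod_nonneg fun j _ => hv j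
    rcases Nat.eq_zero_or_pos p with hp0 | hp1
    · have hF0 : F = ∅ := Finset.card_eq_zero.mp hp0
      have hc0 : c = 0 := by rw [hc, hF0, Finset.sum_empty]
      have hP1 : P = 1 := by rw [hPd, hF0, Finset.prod_empty]
      rw [hp0, pow_zero, one_mul, hri, hc0, zero_add, hP1, mul_one]
      have h2 : e * (u i / (e * m)) ≤ Real.exp (u i / (e * m)) := by
        rw [he]; exact e_mul_le_exp _
      have h3 : e * (u i / (e * m)) = u i / m := by field_simp
      rw [h3] at h2
      calc u i = (u i / m) * m := by field_simp
        _ ≤ Real.exp (u i / (e * m)) * m := mul_le_mul_of_nonneg_right h2 hm0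
    · have hterm : ∀ j ∈ F, (e*m)^(p-1) * v j ≤ P := by
        intro j hj
        have hprod_erase : (e*m)^(p-1) ≤ ∏ j' ∈ F.erase j, v j' := by
          calc (e*m)^(p-1) = ∏ _j' ∈ F.erase j, (e*m) := by
                rw [Finset.prod_const, Finset.card_erase_of_mem hj, hp]
            _ ≤ ∏ j' ∈ F.erase j, v j' :=
                Finset.prod_le_prod (fun _ _ => hem.le)
                  (fun j' hj' => hFB j' (Finset.mem_of_mem_erase hj'))
        calc (e*m)^(p-1) * v j ≤ (∏ j' ∈ F.erase j, v j') * v j :=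
              mul_le_mul_of_nonneg_right hprod_erase (hv j)
          _ = P := by rw [hPd, mul_comm, Finset.mul_prod_erase F v hj]
      have hsumterm : (e*m)^(p-1) * c ≤ (p:ℝ) * P := by
        calc (e*m)^(p-1) * c = ∑ j ∈ F, (e*m)^(p-1) * v j := by rw [hc, Finset.mul_sum]
          _ ≤ ∑ _j ∈ F, P := Finset.sum_le_sum hterm
          _ = (p:ℝ) * P := by rw [Finset.sum_const, hp, nsmul_eq_mul]
      have hppow : (p:ℝ) ≤ e^(p-1) := by rw [he]; exact nat_le_e_pow p
      have hc2 : m^(p-1) * c ≤ P := by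
        have hpow : (0:ℝ) < e^(p-1) := pow_pos he0 _
        have hkey : e^(p-1) * (m^(p-1) * c) ≤ e^(p-1) * P := by
          calc e^(p-1) * (m^(p-1) * c) = (e*m)^(p-1) * c := by rw [mul_pow]; ring
            _ ≤ (p:ℝ) * P := hsumterm
            _ ≤ e^(p-1) * P := mul_le_mul_of_nonneg_right hppow hPnn
        exact le_of_mul_le_mul_left hkey hpow
      have hP1 : e * m^p ≤ P := by
        have h1 : e ≤ e^p := by
          calc e = e^1 := (pow_one e).symm
            _ ≤ e^p := pow_le_pow_right₀ he1.le hp1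
        calc e * m^p ≤ e^p * m^p := mul_le_mul_of_nonneg_right h1 (pow_nonneg hm0 p)
          _ = (e*m)^p := (mul_pow e m p).symm
          _ = ∏ _j ∈ F, (e*m) := by rw [Finset.prod_const, hp]
          _ ≤ P := Finset.prod_le_prod (fun _ _ => hem.le) hFB
      have hmain : m^p * r i ≤ m * P + u i * P / e := by
        have e1 : m^p * c ≤ m * P := by
          have hps : m^p = m * m^(p-1) := by
            conv_lhs => rw [show p = 1 + (p-1) by omega]
            rw [pow_add, pow_one]
          rw [hps, mul_assoc]
          exact mul_le_mul_of_nonneg_left hc2 hm0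
        have e2 : m^p * u i ≤ u i * P / e := by
          have hmp : m^p ≤ P / e := (le_div_iff₀ he0).mpr (by linarith)
          calc m^p * u i ≤ (P/e) * u i := mul_le_mul_of_nonneg_right hmp (hunn i)
            _ = u i * P / e := by ring
        calc m^p * r i = m^p * c + m^p * u i := by rw [hri]; ring
          _ ≤ m * P + u i * P / e := add_le_add e1 e2
      have hfinal : m * P + u i * P / e ≤ Real.exp (u i / (e*m)) * (m * P) := by
        have h1 : 1 + u i/(e*m) ≤ Real.exp (u i/(e*m)) := by
          have := Real.add_one_le_exp (u i/(e*m)); linarith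
        have h2 : (1 + u i/(e*m)) * (m*P) = m*P + u i * P / e := by field_simp
        calc m*P + u i * P/e = (1 + u i/(e*m)) * (m*P) := h2.symm
          _ ≤ Real.exp (u i/(e*m)) * (m*P) :=
              mul_le_mul_of_nonneg_right h1 (mul_nonneg hm0 hPnn)
      exact le_trans hmain hfinal
  -- assemble products
  set n := Fintype.card N with hn
  set k := B.card with hk
  set q := (Finset.univ.filter (fun i : N => i ∉ K)).card with hq
  have hkq : k + q = n := by
    have h1 := Finset.card_filter_add_card_filter_not
      (s := (Finset.univ : Finset N)) (fun i => i ∈ K)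
    have h2 : Finset.univ.filter (fun i : N => i ∈ K) = K := by
      ext i; simp
    have h3 : K.card = k := by
      rw [hK, hk]
      apply Finset.card_image_of_injOn
      intro j hj j' hj' hjj
      exact honeσ (σ j) j (Finset.mem_coe.mp hj) j' (Finset.mem_coe.mp hj') rfl hjj.symm
    rw [h2, h3, Finset.card_univ, ← hq, ← hn] at h1
    exact h1
  have hprodℓ : ∏ i, ℓ i = m ^ q * ∏ j ∈ B, v j := by
    rw [← Finset.prod_filter_mul_prod_filter_not Finset.univ (fun i => i ∈ K) ℓ]
    have h1 : ∏ i ∈ Finset.univ.filter (fun i : N => i ∉ K), ℓ i = m ^ q := by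
      rw [Finset.prod_congr rfl (fun i hi => ?_), Finset.prod_const, hq]
      rw [hℓ]; dsimp only
      rw [if_neg (Finset.mem_filter.mp hi).2]
    have h2 : ∏ i ∈ Finset.univ.filter (fun i : N => i ∈ K), ℓ i = ∏ j ∈ B, v j := by
      have hcongr : ∀ i ∈ Finset.univ.filter (fun i : N => i ∈ K),
          ℓ i = ∏ j ∈ B.filter (fun j => σ j = i), v j := by
        intro i hi
        rw [hℓ]; dsimp only
        rw [if_pos (Finset.mem_filter.mp hi).2]
      rw [Finset.prod_congr rfl hcongr]
      rw [← Finset.prod_fiberwise_of_maps_to (fun j _ => Finset.mem_univ (σ j)) v]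
      apply Finset.prod_subset (Finset.filter_subset _ _)
      intro i _ hiK
      rw [Finset.mem_filter] at hiK
      push_neg at hiK
      have hfib : B.filter (fun j => σ j = i) = ∅ := by
        rw [Finset.eq_empty_iff_forall_notMem]
        intro j hj
        rw [Finset.mem_filter] at hj
        exact hiK (Finset.mem_univ i) (Finset.mem_image.mpr ⟨j, hj.1, hj.2⟩)
      rw [hfib, Finset.prod_empty]
    rw [h1, h2, mul_comm]
  have hprodA : Real.exp ((∑ j ∈ Bᶜ, v j) / (e*m)) * ∏ i, ℓ i
      ≤ Real.exp ((n:ℝ) * e⁻¹) * ∏ i, s i := by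
    have h := Finset.prod_le_prod (s := (Finset.univ : Finset N))
      (f := fun i => Real.exp (w i/(e*m)) * ℓ i)
      (g := fun i => Real.exp e⁻¹ * s i)
      (fun i _ => mul_nonneg (Real.exp_nonneg _) (hℓnn i)) (fun i _ => hclaimA i)
    rw [Finset.prod_mul_distrib, Finset.prod_mul_distrib] at h
    have h1 : ∏ i, Real.exp (w i / (e*m)) = Real.exp ((∑ j ∈ Bᶜ, v j) / (e*m)) := by
      rw [← Real.exp_sum]
      congr 1
      rw [← Finset.sum_div]
      congr 1
      rw [hw]
      exact Finset.sum_fiberwise_of_maps_to (fun j _ => Finset.mem_univ (σ j)) v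
    have h2 : ∏ _i : N, Real.exp e⁻¹ = Real.exp ((n:ℝ) * e⁻¹) := by
      rw [Finset.prod_const, Finset.card_univ, ← hn, ← Real.exp_nat_mul]
    rw [h1, h2] at h
    exact h
  have hprodB : m ^ k * ∏ i, r i
      ≤ Real.exp ((∑ j ∈ Bᶜ, v j)/(e*m)) * (m ^ n * ∏ j ∈ B, v j) := by
    have h := Finset.prod_le_prod (s := (Finset.univ : Finset N))
      (f := fun i => m ^ (B.filter (fun j => ρ j = i)).card * r i)
      (g := fun i => Real.exp (u i/(e*m)) * (m * ∏ j ∈ B.filter (fun j => ρ j = i), v j))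
      (fun i _ => mul_nonneg (pow_nonneg hm0 _) (hrnn i)) (fun i _ => hclaimB i)
    rw [Finset.prod_mul_distrib, Finset.prod_pow_eq_pow_sum] at h
    have hsumcard : ∑ i, (B.filter (fun j => ρ j = i)).card = k := by
      rw [hk]
      exact (Finset.card_eq_sum_card_fiberwise (fun j _ => Finset.mem_univ (ρ j))).symm
    rw [hsumcard] at h
    rw [Finset.prod_mul_distrib, Finset.prod_mul_distrib, Finset.prod_const,
      Finset.card_univ, ← hn] at h
    have h1 : ∏ i, Real.exp (u i / (e*m)) = Real.exp ((∑ j ∈ Bᶜ, v j) / (e*m)) := by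
      rw [← Real.exp_sum]
      congr 1
      rw [← Finset.sum_div]
      congr 1
      rw [hu]
      exact Finset.sum_fiberwise_of_maps_to (fun j _ => Finset.mem_univ (ρ j)) v
    have h2 : ∏ i, ∏ j ∈ B.filter (fun j => ρ j = i), v j = ∏ j ∈ B, v j :=
      Finset.prod_fiberwise_of_maps_to (fun j _ => Finset.mem_univ (ρ j)) v
    rw [h1, h2] at h
    exact h
  have hS : m ^ k * ∏ i, r i ≤ m ^ k * (Real.exp ((n:ℝ) * e⁻¹) * ∏ i, s i) := by
    calc m^k * ∏ i, r i
        ≤ Real.exp ((∑ j ∈ Bᶜ, v j)/(e*m)) * (m^n * ∏ j ∈ B, v j) := hprodB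
      _ = m^k * (Real.exp ((∑ j ∈ Bᶜ, v j)/(e*m)) * (m^q * ∏ j ∈ B, v j)) := by
          rw [← hkq, pow_add]; ring
      _ = m^k * (Real.exp ((∑ j ∈ Bᶜ, v j)/(e*m)) * ∏ i, ℓ i) := by rw [hprodℓ]
      _ ≤ m^k * (Real.exp ((n:ℝ)*e⁻¹) * ∏ i, s i) :=
          mul_le_mul_of_nonneg_left hprodA (pow_nonneg hm0 k)
  exact le_of_mul_le_mul_left hS (pow_pos hmpos k)
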